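/- Let A ∈ M_n(ℝ) and v, w ∈ ℝⁿ. Then vᵀ·exp(hA)·w = 0 for all h ∈ [0,1] if and only if vᵀ·Aᵅ·w = 0 for all integers 0 ≤ α ≤ n−1. -/

import Mathlib

open Matrix NormedSpace Polynomial

attribute [local instance] Matrix.linftyOpNormedAddCommGroup Matrix.linftyOpNormedRing
  Matrix.linftyOpNormedAlgebra

/-- `vᵀ e^{hA} w = 0` for all `h ∈ [0,1]` if and only if `vᵀ Aᵅ w = 0` for all
`0 ≤ α ≤ n−1`. -/
theorem exp_zero_iff_powers {n : ℕ}
    (A : Matrix (Fin n) (Fin n) ℝ) (v w : Fin n → ℝ) :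
    (∀ h ∈ Set.Icc (0 : ℝ) 1, v ⬝ᵥ ((exp (h • A)).mulVec w) = 0) ↔
      (∀ α < n, v ⬝ᵥ ((A ^ α).mulVec w) = 0) := by
  classical
  rcases Nat.eq_zero_or_pos n with hn | hn
  · subst hn
    simp [dotProduct]
  -- the continuous linear functional `M ↦ vᵀ M w`
  set L : Matrix (Fin n) (Fin n) ℝ →L[ℝ] ℝ :=
    LinearMap.toContinuousLinearMap
      { toFun := fun M => v ⬝ᵥ M.mulVec w
        map_add' := fun M N => by simp [Matrix.add_mulVec, dotProduct_add]
        map_smul' := fun c M => by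
          simp [Matrix.smul_mulVec, dotProduct_smul] } with hLdef
  have hLapp : ∀ M : Matrix (Fin n) (Fin n) ℝ, L M = v ⬝ᵥ M.mulVec w := fun M => rfl
  constructor
  · -- exp condition implies power condition
    intro hyp α hα
    set g : ℕ → ℝ → ℝ := fun k h => L (A ^ k * exp (h • A)) with hg
    have hderiv : ∀ k t, HasDerivAt (g k) (g (k + 1) t) t := by
      intro k t
      have H : HasDerivAt (fun u : ℝ => exp (u • A)) (exp (t • A) * A) t :=
        hasDerivAt_exp_smul_const A t
      have H' : HasDerivAt (fun u : ℝ => A ^ k * exp (u • A))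
          (A ^ k * (exp (t • A) * A)) t := H.const_mul _
      have hC := L.hasFDerivAt.comp_hasDerivAt t H'
      have hcomm : exp (t • A) * A = A * exp (t • A) :=
        (((Commute.refl A).smul_left t).exp_left).eq
      have hrw : A ^ k * (exp (t • A) * A) = A ^ (k + 1) * exp (t • A) := by
        rw [hcomm, ← mul_assoc, ← pow_succ]
      rw [hrw] at hC; exact hC
    have hcont : ∀ k, Continuous (g k) := by
      intro k
      have : Differentiable ℝ (g k) := fun t => (hderiv k t).differentiableAt
      exact this.continuous
    have hzero : ∀ k, Set.EqOn (g k) 0 (Set.Icc (0 : ℝ) 1) := by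
      intro k
      induction k with
      | zero =>
        intro t ht
        simpa [g, hLapp] using hyp t ht
      | succ k ih =>
        have hIoo : Set.EqOn (g (k + 1)) 0 (Set.Ioo (0 : ℝ) 1) := by
          intro t ht
          have hev : g k =ᶠ[nhds t] 0 :=
            Filter.eventuallyEq_of_mem
              ((isOpen_Ioo.mem_nhds ht)) fun x hx => ih (Set.Ioo_subset_Icc_self hx)
          have h1 : deriv (g k) t = g (k + 1) t := (hderiv k t).deriv
          have h2 : deriv (g k) t = deriv (0 : ℝ → ℝ) t := hev.deriv_eq
          have : deriv (0 : ℝ → ℝ) t = 0 := by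
            show deriv (fun _ : ℝ => (0 : ℝ)) t = 0
            exact deriv_const t 0
          simp only [Pi.zero_apply]
          rw [← h1, h2, this]
        have hclos : Set.EqOn (g (k + 1)) 0 (closure (Set.Ioo (0 : ℝ) 1)) :=
          hIoo.closure (hcont (k + 1)) continuous_const
        rwa [closure_Ioo (by norm_num : (0 : ℝ) ≠ 1)] at hclos
    have := hzero α (Set.left_mem_Icc.mpr zero_le_one)
    simpa [g, hLapp] using this
  · -- power condition implies exp condition
    intro hyp h _
    -- first, all powers vanish, via Cayley–Hamilton
    have hLpow : ∀ k : ℕ, L (A ^ k) = 0 := by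
      intro k
      have hmod : A ^ k = aeval A (X ^ k %ₘ A.charpoly) :=
        Matrix.pow_eq_aeval_mod_charpoly A k
      have hdeg : (X ^ k %ₘ A.charpoly).natDegree < n := by
        by_cases h0 : (X ^ k %ₘ A.charpoly) = 0
        · simpa [h0] using hn
        · have hlt := Polynomial.degree_modByMonic_lt (X ^ k) (A.charpoly_monic)
          rw [Matrix.charpoly_degree_eq_dim] at hlt
          have := (Polynomial.natDegree_lt_iff_degree_lt h0).mpr (by simpa using hlt)
          simpa using this
      rw [hmod, Polynomial.aeval_eq_sum_range' hdeg, map_sum]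
      refine Finset.sum_eq_zero fun i hi => ?_
      rw [_root_.map_smul]
      have : L (A ^ i) = 0 := by
        rw [hLapp]; exact hyp i (Finset.mem_range.mp hi)
      simp [this]
    have hsum : Summable fun k : ℕ => ((k.factorial : ℝ)⁻¹) • (h • A) ^ k :=
      expSeries_summable' (𝕂 := ℝ) (h • A)
    have : v ⬝ᵥ ((exp (h • A)).mulVec w) = L (exp (h • A)) := rfl
    rw [this, exp_eq_tsum (𝕂 := ℝ), L.map_tsum hsum]
    have hterm : ∀ k : ℕ, L (((k.factorial : ℝ)⁻¹) • (h • A) ^ k) = 0 := by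
      intro k
      rw [_root_.map_smul, _root_.smul_pow, _root_.map_smul, hLpow k]
      simp
    simp [hterm]
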